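/- (Lemma 3) For all integers k, ℓ ≥ 1, the (k+1)×(k+1) determinant det( f(ℓ·i−1, x, q·s)^j · (−f(ℓ·i, x, s))^{k−j} )_{i,j=0}^{k} (row index i, column index j) equals (−1)^{binom(k+1,3)·ℓ} · s^{−binom(k+1,2) + binom(k+1,3)·ℓ} · q^{binom(k+1,3)·binom(ℓ,2) + binom(k+1,4)·ℓ^2} · ∏_{j=0}^{k−1} fac(k−j, x, q^{ℓ·j}·s, ℓ), where powers of s with possibly negative integer exponents are interpreted as integer powers of the nonzero field element s. -/

import Mathlib

open Finset

variable {K : Type*} [Field K]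

noncomputable def qFibPos (q x t : K) : ℕ → K
  | 0 => 0
  | 1 => 1
  | n + 2 => x * qFibPos q x t (n + 1) + q ^ n * t * qFibPos q x t n

noncomputable def qFibNeg (q x t : K) : ℕ → K
  | 0 => 0
  | 1 => q / t
  | m + 2 => (qFibNeg q x t m - x * qFibNeg q x t (m + 1)) * q ^ (m + 2) / t

/-- The Carlitz q-Fibonacci polynomial `f(n, x, t)` for `n : ℤ`, defined by `f 0 = 0`,
`f 1 = 1` and `f n = x * f (n-1) + q^(n-2) * t * f (n-2)`, solved backwards for `n < 0`. -/
noncomputable def qFib (q x t : K) : ℤ → K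
  | Int.ofNat n => qFibPos q x t n
  | Int.negSucc m => qFibNeg q x t (m + 1)

/-- `fac(k, x, t, m) = ∏_{i=1}^{k} f(i·m, x, t)`. -/
noncomputable def qFac (q x t : K) (k m : ℕ) : K :=
  ∏ i ∈ Finset.range k, qFib q x t (((i : ℤ) + 1) * m)

lemma qFib_natCast (q x t : K) (n : ℕ) : qFib q x t (n : ℤ) = qFibPos q x t n := rfl

lemma qFib_zero (q x t : K) : qFib q x t 0 = 0 := rfl
lemma qFib_one (q x t : K) : qFib q x t 1 = 1 := rfl
lemma qFib_negOne (q x t : K) : qFib q x t (-1) = q / t := rfl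

lemma qFib_rec (q x t : K) (hq : q ≠ 0) (ht : t ≠ 0) (n : ℤ) :
    qFib q x t (n + 2) = x * qFib q x t (n + 1) + q ^ n * t * qFib q x t n := by
  match n with
  | Int.ofNat m =>
      show qFib q x t ((m+2 : ℕ) : ℤ) = x * qFib q x t ((m+1 : ℕ) : ℤ) + _ * t * qFib q x t ((m:ℕ) : ℤ)
      rw [qFib_natCast, qFib_natCast, qFib_natCast]
      show qFibPos q x t (m+2) = _
      rw [qFibPos]
      norm_num [zpow_natCast]
  | Int.negSucc 0 =>
      show qFib q x t 1 = x * qFib q x t 0 + q ^ (-1 : ℤ) * t * qFib q x t (-1)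
      rw [qFib_one, qFib_zero, qFib_negOne]
      field_simp
      simp
  | Int.negSucc 1 =>
      show qFib q x t 0 = x * qFib q x t (-1) + q ^ (-2 : ℤ) * t * qFib q x t (-2)
      rw [qFib_zero, qFib_negOne]
      show (0:K) = _ + _ * t * qFibNeg q x t 2
      rw [qFibNeg]
      show (0:K) = x * (q/t) + q^(-2:ℤ) * t * ((qFibNeg q x t 0 - x * qFibNeg q x t 1) * q ^ 2 / t)
      rw [qFibNeg, qFibNeg]
      have : (q:K)^(-2:ℤ) = (q^2)⁻¹ := by rw [zpow_neg, zpow_two]; ring_nf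
      rw [this]
      field_simp
      ring
  | Int.negSucc (m+2) =>
      have h1 : (Int.negSucc (m+2)) + 2 = Int.negSucc m := by simp [Int.negSucc_eq]; omega
      have h2 : (Int.negSucc (m+2)) + 1 = Int.negSucc (m+1) := by simp [Int.negSucc_eq]; omega
      rw [h1, h2]
      show qFibNeg q x t (m+1) = x * qFibNeg q x t (m+2) + q ^ (Int.negSucc (m+2)) * t * qFibNeg q x t (m+3)
      have h3 : qFibNeg q x t (m+3) = (qFibNeg q x t (m+1) - x * qFibNeg q x t (m+2)) * q ^ (m+3) / t := by
        rw [show m+3 = (m+1)+2 from rfl, qFibNeg]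
      rw [h3]
      have hz : (q:K) ^ (Int.negSucc (m+2)) = (q ^ (m+3))⁻¹ := by
        rw [zpow_negSucc]
      rw [hz]
      field_simp
      ring

lemma cassini (q x t : K) (hq : q ≠ 0) (ht : t ≠ 0) (m : ℕ) :
    t * (qFib q x (q*t) ((m:ℤ) - 1) * qFib q x t ((m:ℤ) + 1)
      - qFib q x (q*t) (m:ℤ) * qFib q x t (m:ℤ))
    = (-1)^m * t^m * q ^ m.choose 2 := by
  induction m with
  | zero =>
      show t * (qFib q x (q*t) (-1) * qFib q x t 1 - qFib q x (q*t) 0 * qFib q x t 0) = _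
      rw [qFib_negOne, qFib_one, qFib_zero]
      field_simp
      ring
      simp [Nat.choose]
  | succ m ih =>
      have hqt : q * t ≠ 0 := mul_ne_zero hq ht
      have e1 := qFib_rec q x t hq ht (m:ℤ)
      have e2 := qFib_rec q x (q*t) hq hqt ((m:ℤ)-1)
      rw [show (m:ℤ)-1+2 = (m:ℤ)+1 by ring, show (m:ℤ)-1+1 = (m:ℤ) by ring] at e2
      rw [show q^((m:ℤ)-1) * (q*t) = q^(m:ℤ) * t by
        rw [zpow_sub_one₀ hq]; field_simp] at e2
      rw [zpow_natCast] at e1 e2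
      push_cast
      rw [show (m:ℤ)+1-1 = (m:ℤ) by ring, show (m:ℤ)+1+1 = (m:ℤ)+2 by ring, e1, e2]
      rw [Nat.choose_succ_succ, Nat.choose_one_right, pow_add, pow_add, pow_succ, pow_succ]
      linear_combination (-(q^m * t)) * ih

lemma crossAux (q x t : K) (hq : q ≠ 0) (ht : t ≠ 0) (m : ℕ) : ∀ d : ℕ,
    t * (qFib q x (q*t) ((m:ℤ)-1) * qFib q x t ((m:ℤ)+d)
        - qFib q x (q*t) ((m:ℤ)+d-1) * qFib q x t (m:ℤ))
    = (-1)^m * t^m * q^(m.choose 2) * qFib q x (q^m*t) (d:ℤ) := by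
  intro d
  induction d using Nat.strong_induction_on with
  | _ d ih => match d with
    | 0 => simp [qFib_zero]
    | 1 =>
        have h := cassini q x t hq ht m
        push_cast
        rw [show (m:ℤ)+1-1 = (m:ℤ) by ring, qFib_one, mul_one]
        exact h
    | (e+2) =>
        have h1 := ih (e+1) (by omega)
        have h0 := ih e (by omega)
        have hqt : q * t ≠ 0 := mul_ne_zero hq ht
        have hqmt : q^m * t ≠ 0 := mul_ne_zero (pow_ne_zero m hq) ht
        have e1 := qFib_rec q x t hq ht ((m:ℤ)+e)
        have e2 := qFib_rec q x (q*t) hq hqt ((m:ℤ)+e-1)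
        have e3 := qFib_rec q x (q^m*t) hq hqmt (e:ℤ)
        rw [show (m:ℤ)+e-1+2 = (m:ℤ)+e+1 by ring, show (m:ℤ)+e-1+1 = (m:ℤ)+e by ring] at e2
        rw [show q^((m:ℤ)+e-1) * (q*t) = q^(m+e) * t by
          rw [zpow_sub_one₀ hq, show (m:ℤ)+(e:ℤ) = ((m+e:ℕ):ℤ) by push_cast; ring,
            zpow_natCast]; field_simp] at e2
        rw [show q^((e:ℤ)) * (q^m*t) = q^(m+e) * t by
          rw [zpow_natCast, pow_add]; ring] at e3
        rw [show q^((m:ℤ)+(e:ℤ)) = q^(m+e) by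
          rw [show (m:ℤ)+(e:ℤ) = ((m+e:ℕ):ℤ) by push_cast; ring, zpow_natCast]] at e1
        push_cast at h1 h0 ⊢
        rw [show (m:ℤ)+((e:ℤ)+1) = (m:ℤ)+(e:ℤ)+1 by ring] at h1
        rw [show (m:ℤ)+(e:ℤ)+1-1 = (m:ℤ)+(e:ℤ) by ring] at h1
        rw [show (m:ℤ)+((e:ℤ)+2) = (m:ℤ)+(e:ℤ)+2 by ring,
            show (m:ℤ)+(e:ℤ)+2-1 = (m:ℤ)+(e:ℤ)+1 by ring, e1, e2, e3]
        linear_combination x * h1 + q^(m+e) * t * h0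


lemma pair_prod_pow {R : Type*} [CommRing R] (n : ℕ) (b : Fin n → R) :
    ∏ i : Fin n, ∏ j ∈ Ioi i, (b i * b j) = ∏ i : Fin n, b i ^ (n - 1) := by
  have h1 : ∏ i : Fin n, ∏ j ∈ Ioi i, (b i * b j)
      = (∏ i : Fin n, ∏ j ∈ Ioi i, b i) * (∏ i : Fin n, ∏ j ∈ Ioi i, b j) := by
    rw [← Finset.prod_mul_distrib]
    exact Finset.prod_congr rfl fun i _ => Finset.prod_mul_distrib
  have h2 : (∏ i : Fin n, ∏ j ∈ Ioi i, b j) = ∏ j : Fin n, ∏ i ∈ Iio j, b j := by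
    exact Finset.prod_comm' (by simp)
  rw [h1, h2]
  rw [← Finset.prod_mul_distrib]
  apply Finset.prod_congr rfl
  intro i _
  rw [Finset.prod_const, Finset.prod_const, Fin.card_Ioi, Fin.card_Iio, ← pow_add]
  congr 1
  omega

lemma det_hom_vandermonde_field {L : Type*} [Field L] (n : ℕ) (a b : Fin n → L)
    (hb : ∀ i, b i ≠ 0) :
    (Matrix.of fun i j : Fin n => a i ^ (j:ℕ) * b i ^ (n - 1 - (j:ℕ))).det =
      ∏ i : Fin n, ∏ j ∈ Finset.Ioi i, (a j * b i - a i * b j) := by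
  have key : ∀ i j : Fin n, a i ^ (j:ℕ) * b i ^ (n - 1 - (j:ℕ))
      = b i ^ (n-1) * (a i / b i) ^ (j:ℕ) := by
    intro i j
    have hj : (j:ℕ) ≤ n - 1 := by omega
    rw [div_pow, pow_sub₀ _ (hb i) hj]
    field_simp
  have : (Matrix.of fun i j : Fin n => a i ^ (j:ℕ) * b i ^ (n - 1 - (j:ℕ)))
      = Matrix.of fun i j : Fin n => b i ^ (n-1) * (Matrix.vandermonde fun i => a i / b i) i j := by
    ext i j; simp [key i j, Matrix.vandermonde]
  rw [this, Matrix.det_mul_column, Matrix.det_vandermonde, ← pair_prod_pow n b]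
  rw [← Finset.prod_mul_distrib]
  apply Finset.prod_congr rfl
  intro i _
  rw [← Finset.prod_mul_distrib]
  apply Finset.prod_congr rfl
  intro j _
  have hi := hb i
  have hj := hb j
  field_simp

lemma det_hom_vandermonde {R : Type*} [CommRing R] (n : ℕ) (a b : Fin n → R) :
    (Matrix.of fun i j : Fin n => a i ^ (j:ℕ) * b i ^ (n - 1 - (j:ℕ))).det =
      ∏ i : Fin n, ∏ j ∈ Finset.Ioi i, (a j * b i - a i * b j) := by
  have hP : (Matrix.of fun i j : Fin n =>
        (MvPolynomial.X (Sum.inl i) : MvPolynomial (Fin n ⊕ Fin n) ℤ) ^ (j:ℕ) *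
        MvPolynomial.X (Sum.inr i) ^ (n - 1 - (j:ℕ))).det =
      ∏ i : Fin n, ∏ j ∈ Finset.Ioi i,
        ((MvPolynomial.X (Sum.inl j) : MvPolynomial (Fin n ⊕ Fin n) ℤ) * MvPolynomial.X (Sum.inr i)
          - MvPolynomial.X (Sum.inl i) * MvPolynomial.X (Sum.inr j)) := by
    apply IsFractionRing.injective (MvPolynomial (Fin n ⊕ Fin n) ℤ)
      (FractionRing (MvPolynomial (Fin n ⊕ Fin n) ℤ))
    set φ := algebraMap (MvPolynomial (Fin n ⊕ Fin n) ℤ)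
      (FractionRing (MvPolynomial (Fin n ⊕ Fin n) ℤ)) with hφdef
    have hB : ∀ i : Fin n, φ (MvPolynomial.X (Sum.inr i)) ≠ 0 := by
      intro i h
      exact MvPolynomial.X_ne_zero (R := ℤ) (Sum.inr i)
        (IsFractionRing.injective (MvPolynomial (Fin n ⊕ Fin n) ℤ)
          (FractionRing (MvPolynomial (Fin n ⊕ Fin n) ℤ)) (by rw [map_zero]; exact h))
    have hfield := det_hom_vandermonde_field n
      (fun i => φ (MvPolynomial.X (Sum.inl i))) (fun i => φ (MvPolynomial.X (Sum.inr i))) hB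
    rw [RingHom.map_det]
    have hm : φ.mapMatrix (Matrix.of fun i j : Fin n =>
          (MvPolynomial.X (Sum.inl i) : MvPolynomial (Fin n ⊕ Fin n) ℤ) ^ (j:ℕ) *
          MvPolynomial.X (Sum.inr i) ^ (n - 1 - (j:ℕ)))
        = Matrix.of fun i j : Fin n =>
            φ (MvPolynomial.X (Sum.inl i)) ^ (j:ℕ) * φ (MvPolynomial.X (Sum.inr i)) ^ (n - 1 - (j:ℕ)) := by
      ext i j; simp
    rw [hm, hfield, map_prod]
    refine Finset.prod_congr rfl fun i _ => ?_
    rw [map_prod]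
    refine Finset.prod_congr rfl fun j _ => ?_
    simp
  have := congrArg (MvPolynomial.eval₂Hom (Int.castRingHom R) (Sum.elim a b)) hP
  rw [RingHom.map_det, map_prod] at this
  have hm : (MvPolynomial.eval₂Hom (Int.castRingHom R) (Sum.elim a b)).mapMatrix
        (Matrix.of fun i j : Fin n =>
          (MvPolynomial.X (Sum.inl i) : MvPolynomial (Fin n ⊕ Fin n) ℤ) ^ (j:ℕ) *
          MvPolynomial.X (Sum.inr i) ^ (n - 1 - (j:ℕ)))
      = Matrix.of fun i j : Fin n => a i ^ (j:ℕ) * b i ^ (n - 1 - (j:ℕ)) := by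
    ext i j
    simp [MvPolynomial.eval₂Hom_X']
  rw [hm] at this
  rw [this]
  refine Finset.prod_congr rfl fun i _ => ?_
  rw [map_prod]
  refine Finset.prod_congr rfl fun j _ => ?_
  simp [MvPolynomial.eval₂Hom_X']


lemma pascal2 (n : ℕ) : (n+2).choose 2 = (n+1).choose 2 + (n+1) := by
  have h : (n+2).choose 2 = (n+1).choose 1 + (n+1).choose 2 := Nat.choose_succ_succ (n+1) 1
  rw [Nat.choose_one_right] at h
  omega

lemma pascal3 (n : ℕ) : (n+2).choose 3 = (n+1).choose 3 + (n+1).choose 2 := by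
  have h : (n+2).choose 3 = (n+1).choose 2 + (n+1).choose 3 := Nat.choose_succ_succ (n+1) 2
  omega

lemma pascal4 (n : ℕ) : (n+2).choose 4 = (n+1).choose 4 + (n+1).choose 3 := by
  have h : (n+2).choose 4 = (n+1).choose 3 + (n+1).choose 4 := Nat.choose_succ_succ (n+1) 3
  omega

lemma sum_range_id' (n : ℕ) : ∑ i ∈ range (n+1), i = (n+1).choose 2 := by
  induction n with
  | zero => simp
  | succ n ih => rw [Finset.sum_range_succ, ih, pascal2]

lemma sum_range_c2 (n : ℕ) : ∑ i ∈ range (n+1), i.choose 2 = (n+1).choose 3 := by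
  induction n with
  | zero => simp [Nat.choose]
  | succ n ih => rw [Finset.sum_range_succ, ih, pascal3]

lemma choose_two_add (a b : ℕ) : (a+b).choose 2 = a.choose 2 + b.choose 2 + a*b := by
  induction b with
  | zero => simp
  | succ b ih =>
    have h1 : (a+(b+1)) = (a+b)+1 := by ring
    have h2 : ((a+b)+1).choose 2 = (a+b).choose 2 + (a+b) := by
      cases a + b with
      | zero => simp
      | succ m => rw [pascal2]
    have h3 : (b+1).choose 2 = b.choose 2 + b := by
      cases b with
      | zero => simp
      | succ m => rw [pascal2]
    rw [h1, h2, ih, h3]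
    ring

lemma choose_two_mul (l i : ℕ) : (l*i).choose 2 = l^2 * i.choose 2 + l.choose 2 * i := by
  induction i with
  | zero => simp
  | succ i ih =>
    have h3 : (i+1).choose 2 = i.choose 2 + i := by
      cases i with
      | zero => simp
      | succ m => rw [pascal2]
    rw [Nat.mul_succ, choose_two_add, ih, h3]
    ring

lemma sumS1 (k : ℕ) : ∑ i ∈ range (k+1), i*(k-i) = (k+1).choose 3 := by
  induction k with
  | zero => simp [Nat.choose]
  | succ k ih =>
    rw [Finset.sum_range_succ, Nat.sub_self, Nat.mul_zero, Nat.add_zero]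
    have h : ∀ i ∈ range (k+1), i*(k+1-i) = i*(k-i) + i := by
      intro i hi
      rw [Finset.mem_range] at hi
      have : k+1-i = (k-i)+1 := by omega
      rw [this]; ring
    rw [Finset.sum_congr rfl h, Finset.sum_add_distrib, ih, sum_range_id', pascal3]

lemma sumSk (k : ℕ) : ∑ i ∈ range (k+1), (k-i) = (k+1).choose 2 := by
  induction k with
  | zero => simp
  | succ k ih =>
    rw [Finset.sum_range_succ, Nat.sub_self, Nat.add_zero]
    have h : ∀ i ∈ range (k+1), (k+1-i) = (k-i) + 1 := by
      intro i hi
      rw [Finset.mem_range] at hi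
      omega
    rw [Finset.sum_congr rfl h, Finset.sum_add_distrib, ih, Finset.sum_const, pascal2]
    simp

lemma sumS2 (k l : ℕ) : ∑ i ∈ range (k+1), (k-i) * (l*i).choose 2
    = (k+1).choose 3 * l.choose 2 + (k+1).choose 4 * l^2 := by
  induction k with
  | zero => simp [Nat.choose]
  | succ k ih =>
    rw [Finset.sum_range_succ, Nat.sub_self, Nat.zero_mul, Nat.add_zero]
    have h : ∀ i ∈ range (k+1), (k+1-i) * (l*i).choose 2
        = (k-i) * (l*i).choose 2 + (l^2 * i.choose 2 + l.choose 2 * i) := by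
      intro i hi
      rw [Finset.mem_range] at hi
      have h2 : k+1-i = (k-i)+1 := by omega
      rw [h2, choose_two_mul]
      ring
    rw [Finset.sum_congr rfl h, Finset.sum_add_distrib, ih, Finset.sum_add_distrib,
      ← Finset.mul_sum, ← Finset.mul_sum, sum_range_c2, sum_range_id', pascal3, pascal4]
    ring


lemma sumS3 (k ℓ : ℕ) : ∑ i ∈ range (k+1), (((ℓ:ℤ) * i - 1) * ((k-i : ℕ) : ℤ))
    = -(((k+1).choose 2 : ℕ) : ℤ) + (((k+1).choose 3 : ℕ) : ℤ) * ℓ := by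
  have h : ∀ i ∈ range (k+1), ((ℓ:ℤ) * i - 1) * ((k-i : ℕ) : ℤ)
      = (ℓ:ℤ) * ((i*(k-i) : ℕ) : ℤ) - ((k-i : ℕ) : ℤ) := by
    intro i _
    rw [Nat.cast_mul]
    ring
  rw [Finset.sum_congr rfl h, Finset.sum_sub_distrib, ← Finset.mul_sum,
    ← Nat.cast_sum, ← Nat.cast_sum, sumS1, sumSk]
  ring

lemma prod_zpow_eq {ι : Type*} (s : K) (hs : s ≠ 0) (t : Finset ι) (f : ι → ℤ) :
    ∏ i ∈ t, s ^ f i = s ^ (∑ i ∈ t, f i) := by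
  induction t using Finset.cons_induction with
  | empty => simp
  | cons a t ha ih => rw [Finset.prod_cons, Finset.sum_cons, zpow_add₀ hs, ih]

lemma qFac_zero (q x t : K) (m : ℕ) : qFac q x t 0 m = 1 := by simp [qFac]

theorem det_eval_lemma3 (q x s : K) (hq : q ≠ 0) (hs : s ≠ 0)
    (k ℓ : ℕ) (hk : 1 ≤ k) (hℓ : 1 ≤ ℓ) :
    Matrix.det (Matrix.of fun i j : Fin (k + 1) =>
        qFib q x (q * s) ((ℓ : ℤ) * (i : ℕ) - 1) ^ (j : ℕ) *
          (-qFib q x s ((ℓ : ℤ) * (i : ℕ))) ^ (k - (j : ℕ))) =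
      (-1 : K) ^ ((k + 1).choose 3 * ℓ) *
      s ^ (-((k + 1).choose 2 : ℤ) + ((k + 1).choose 3 : ℤ) * ℓ) *
      q ^ ((k + 1).choose 3 * ℓ.choose 2 + (k + 1).choose 4 * ℓ ^ 2) *
      ∏ j ∈ Finset.range k, qFac q x (q ^ (ℓ * j) * s) (k - j) ℓ := by
  -- Step 1: apply the homogeneous Vandermonde determinant
  have hmat : (Matrix.of fun i j : Fin (k + 1) =>
        qFib q x (q * s) ((ℓ : ℤ) * (i : ℕ) - 1) ^ (j : ℕ) *
          (-qFib q x s ((ℓ : ℤ) * (i : ℕ))) ^ (k - (j : ℕ)))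
      = Matrix.of fun i j : Fin (k + 1) =>
        (fun i : Fin (k+1) => qFib q x (q * s) ((ℓ : ℤ) * (i : ℕ) - 1)) i ^ (j : ℕ) *
          (fun i : Fin (k+1) => -qFib q x s ((ℓ : ℤ) * (i : ℕ))) i ^ ((k + 1) - 1 - (j : ℕ)) := by
    ext i j
    norm_num
  rw [hmat, det_hom_vandermonde (k+1)
    (fun i : Fin (k+1) => qFib q x (q * s) ((ℓ : ℤ) * (i : ℕ) - 1))
    (fun i : Fin (k+1) => -qFib q x s ((ℓ : ℤ) * (i : ℕ)))]
  -- Step 2: rewrite each pairwise factor using the cross identity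
  have pair : ∀ i j : Fin (k+1), j ∈ Ioi i →
      qFib q x (q * s) ((ℓ : ℤ) * (j : ℕ) - 1) * (-qFib q x s ((ℓ : ℤ) * (i : ℕ)))
        - qFib q x (q * s) ((ℓ : ℤ) * (i : ℕ) - 1) * (-qFib q x s ((ℓ : ℤ) * (j : ℕ)))
      = ((-1 : K) ^ (ℓ * (i:ℕ)) * s ^ ((ℓ : ℤ) * (i:ℕ) - 1) * q ^ ((ℓ * (i:ℕ)).choose 2))
          * qFib q x (q ^ (ℓ * (i:ℕ)) * s) ((ℓ * (j:ℕ) - ℓ * (i:ℕ) : ℕ) : ℤ) := by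
    intro i j hij
    rw [Finset.mem_Ioi] at hij
    have hle : ℓ * (i:ℕ) ≤ ℓ * (j:ℕ) := Nat.mul_le_mul_left _ (le_of_lt hij)
    have hc := crossAux q x s hq hs (ℓ * (i:ℕ)) (ℓ * (j:ℕ) - ℓ * (i:ℕ))
    rw [show ((ℓ * (i:ℕ) : ℕ) : ℤ) = (ℓ : ℤ) * (i:ℕ) by push_cast; ring] at hc
    rw [show (ℓ : ℤ) * (i:ℕ) + ((ℓ * (j:ℕ) - ℓ * (i:ℕ) : ℕ) : ℤ) = (ℓ : ℤ) * (j:ℕ) by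
      rw [Nat.cast_sub hle]; push_cast; ring] at hc
    rw [show (ℓ : ℤ) * (j:ℕ) - 1 = (ℓ : ℤ) * (j:ℕ) - 1 from rfl] at hc
    have h1 : s * s ^ ((ℓ : ℤ) * (i:ℕ) - 1) = s ^ (ℓ * (i:ℕ)) := by
      rw [mul_comm, ← zpow_add_one₀ hs]
      rw [show (ℓ : ℤ) * (i:ℕ) - 1 + 1 = ((ℓ * (i:ℕ) : ℕ) : ℤ) by push_cast; ring]
      rw [zpow_natCast]
    apply mul_left_cancel₀ hs
    linear_combination hc - ((-1 : K) ^ (ℓ * (i:ℕ)) * q ^ ((ℓ * (i:ℕ)).choose 2)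
      * qFib q x (q ^ (ℓ * (i:ℕ)) * s) ((ℓ * (j:ℕ) - ℓ * (i:ℕ) : ℕ) : ℤ)) * h1
  rw [Finset.prod_congr rfl (fun i _ => Finset.prod_congr rfl (pair i))]
  -- Step 3: split the product
  have split : ∀ i : Fin (k+1),
      (∏ j ∈ Ioi i, ((-1 : K) ^ (ℓ * (i:ℕ)) * s ^ ((ℓ : ℤ) * (i:ℕ) - 1) * q ^ ((ℓ * (i:ℕ)).choose 2))
          * qFib q x (q ^ (ℓ * (i:ℕ)) * s) ((ℓ * (j:ℕ) - ℓ * (i:ℕ) : ℕ) : ℤ))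
      = ((-1 : K) ^ (ℓ * (i:ℕ) * (k - (i:ℕ))))
        * (s ^ (((ℓ : ℤ) * (i:ℕ) - 1) * ((k - (i:ℕ) : ℕ) : ℤ)))
        * (q ^ ((ℓ * (i:ℕ)).choose 2 * (k - (i:ℕ))))
        * qFac q x (q ^ (ℓ * (i:ℕ)) * s) (k - (i:ℕ)) ℓ := by
    intro i
    rw [Finset.prod_mul_distrib, Finset.prod_const, Fin.card_Ioi]
    have hcard : k + 1 - 1 - (i:ℕ) = k - (i:ℕ) := by omega
    rw [hcard]
    have hinner : (∏ j ∈ Ioi i, qFib q x (q ^ (ℓ * (i:ℕ)) * s) ((ℓ * (j:ℕ) - ℓ * (i:ℕ) : ℕ) : ℤ))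
        = qFac q x (q ^ (ℓ * (i:ℕ)) * s) (k - (i:ℕ)) ℓ := by
      rw [qFac]
      refine Finset.prod_bij' (fun (a : Fin (k+1)) (_ : a ∈ Ioi i) => (a:ℕ) - (i:ℕ) - 1)
        (fun (r : ℕ) (hr : r ∈ Finset.range (k - (i:ℕ))) =>
          (⟨(i:ℕ) + r + 1, by rw [Finset.mem_range] at hr; omega⟩ : Fin (k+1)))
        ?_ ?_ ?_ ?_ ?_
      · intro a ha
        rw [Finset.mem_Ioi] at ha
        rw [Finset.mem_range]
        have h1 : (i:ℕ) < (a:ℕ) := ha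
        have h2 : (a:ℕ) < k + 1 := a.isLt
        show (a:ℕ) - (i:ℕ) - 1 < k - (i:ℕ)
        omega
      · intro r hr
        rw [Finset.mem_range] at hr
        rw [Finset.mem_Ioi]
        show (i:ℕ) < (i:ℕ) + r + 1
        omega
      · intro a ha
        rw [Finset.mem_Ioi] at ha
        have h1 : (i:ℕ) < (a:ℕ) := ha
        apply Fin.ext
        show (i:ℕ) + ((a:ℕ) - (i:ℕ) - 1) + 1 = (a:ℕ)
        omega
      · intro r hr
        rw [Finset.mem_range] at hr
        show (i:ℕ) + r + 1 - (i:ℕ) - 1 = r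
        omega
      · intro a ha
        rw [Finset.mem_Ioi] at ha
        have h1 : (i:ℕ) < (a:ℕ) := ha
        beta_reduce
        congr 1
        have e1 : ((ℓ * (a:ℕ) - ℓ * (i:ℕ) : ℕ) : ℤ)
            = (ℓ:ℤ) * (a:ℕ) - (ℓ:ℤ) * (i:ℕ) := by
          rw [Nat.cast_sub (Nat.mul_le_mul_left _ h1.le)]
          push_cast
          ring
        rw [e1]
        have e2 : (((a:ℕ) - (i:ℕ) - 1 : ℕ) : ℤ) = ((a:ℕ):ℤ) - ((i:ℕ):ℤ) - 1 := by omega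
        rw [e2]
        push_cast
        ring
    rw [hinner]
    rw [mul_pow, mul_pow, ← pow_mul, ← pow_mul]
    rw [← zpow_natCast (s ^ ((ℓ : ℤ) * (i:ℕ) - 1)) (k - (i:ℕ)), ← zpow_mul]
  rw [Finset.prod_congr rfl (fun i _ => split i)]
  rw [Finset.prod_mul_distrib, Finset.prod_mul_distrib, Finset.prod_mul_distrib]
  have hP1 : ∏ i : Fin (k+1), (-1 : K) ^ (ℓ * (i:ℕ) * (k - (i:ℕ)))
      = (-1 : K) ^ ((k + 1).choose 3 * ℓ) := by
    rw [Finset.prod_pow_eq_pow_sum]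
    congr 1
    rw [Fin.sum_univ_eq_sum_range (fun m => ℓ * m * (k - m)) (k+1)]
    rw [Finset.sum_congr rfl (fun m _ => by rw [mul_assoc] : ∀ m ∈ range (k+1),
      ℓ * m * (k - m) = ℓ * (m * (k - m))), ← Finset.mul_sum, sumS1, mul_comm]
  have hP3 : ∏ i : Fin (k+1), q ^ ((ℓ * (i:ℕ)).choose 2 * (k - (i:ℕ)))
      = q ^ ((k + 1).choose 3 * ℓ.choose 2 + (k + 1).choose 4 * ℓ ^ 2) := by
    rw [Finset.prod_pow_eq_pow_sum]
    congr 1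
    rw [Fin.sum_univ_eq_sum_range (fun m => (ℓ * m).choose 2 * (k - m)) (k+1)]
    rw [Finset.sum_congr rfl (fun m _ => mul_comm _ _ : ∀ m ∈ range (k+1),
      (ℓ * m).choose 2 * (k - m) = (k - m) * (ℓ * m).choose 2), sumS2]
  have hP2 : ∏ i : Fin (k+1), s ^ (((ℓ : ℤ) * (i:ℕ) - 1) * ((k - (i:ℕ) : ℕ) : ℤ))
      = s ^ (-((k + 1).choose 2 : ℤ) + ((k + 1).choose 3 : ℤ) * ℓ) := by
    rw [prod_zpow_eq s hs]
    congr 1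
    rw [Fin.sum_univ_eq_sum_range (fun m => ((ℓ : ℤ) * m - 1) * ((k - m : ℕ) : ℤ)) (k+1)]
    rw [sumS3]
  have hP4 : ∏ i : Fin (k+1), qFac q x (q ^ (ℓ * (i:ℕ)) * s) (k - (i:ℕ)) ℓ
      = ∏ j ∈ Finset.range k, qFac q x (q ^ (ℓ * j) * s) (k - j) ℓ := by
    rw [Fin.prod_univ_eq_prod_range (fun m => qFac q x (q ^ (ℓ * m) * s) (k - m) ℓ) (k+1)]
    rw [Finset.prod_range_succ, Nat.sub_self, qFac_zero, mul_one]
  simp only [hP1, hP2, hP3, hP4]
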